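/- Let t ∈ (1/2, 1), 0 < ε < t - 1/2, and let M be an even integer with M > 2/ε. Then for every interval I = [a,b] with a < b and every Lebesgue measurable set E with L(E ∩ I) ≥ t · L(I), there exists an integer j with 1 ≤ j ≤ M - 2 such that L(E ∩ I_j)/L(I_j) ≥ t - ε and L(E ∩ I_{j+2}) > 0, where I_j = [a + (j-1)(b-a)/M, a + j(b-a)/M]. -/

import Mathlib

open MeasureTheory Set

set_option maxHeartbeats 1000000 in
theorem stmt10 (t ε : ℝ) (ht : t ∈ Set.Ioo (1/2 : ℝ) 1)
    (hε : 0 < ε ∧ ε < t - 1/2)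
    (M : ℕ) (hMeven : Even M) (hM : (2 : ℝ) / ε < M)
    (a b : ℝ) (hab : a < b)
    (E : Set ℝ) (hE : MeasurableSet E)
    (hdens : t * (volume (Set.Icc a b)).toReal ≤ (volume (E ∩ Set.Icc a b)).toReal) :
    ∃ j : ℕ, 1 ≤ j ∧ j ≤ M - 2 ∧
      t - ε ≤ (volume (E ∩ Set.Icc (a + (j - 1 : ℝ) * (b - a) / M) (a + (j : ℝ) * (b - a) / M))).toReal
          / (volume (Set.Icc (a + (j - 1 : ℝ) * (b - a) / M) (a + (j : ℝ) * (b - a) / M))).toReal ∧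
      0 < volume (E ∩ Set.Icc (a + (j + 1 : ℝ) * (b - a) / M) (a + (j + 2 : ℝ) * (b - a) / M)) := by
  obtain ⟨ht1, ht2⟩ := ht
  obtain ⟨hε0, hε1⟩ := hε
  have hεhalf : ε < 1/2 := by linarith
  have htε : 1/2 < t - ε := by linarith
  have hMR : (4:ℝ) < M := by
    have h4 : (4:ℝ) < 2/ε := by
      rw [lt_div_iff₀ hε0]; nlinarith
    linarith
  have hM5 : 5 ≤ M := by
    have : (4:ℕ) < M := by exact_mod_cast hMR
    omega
  have hMpos : (0:ℝ) < M := by linarith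
  have hεM : 2 < ε * M := by
    rw [div_lt_iff₀ hε0] at hM; linarith
  set ℓ : ℝ := (b - a) / M with hℓdef
  have hℓ : 0 < ℓ := div_pos (by linarith) hMpos
  have hMℓ : (M:ℝ) * ℓ = b - a := by
    rw [hℓdef]; field_simp [hMpos.ne']
  have hmd : ∀ c : ℝ, c * (b - a) / M = c * ℓ := fun c => mul_div_assoc c _ _
  set f : ℕ → Set ℝ := fun j => Set.Icc (a + ((j:ℝ) - 1) * ℓ) (a + (j:ℝ) * ℓ) with hfdef
  have hIvol : ∀ j : ℕ, volume (f j) = ENNReal.ofReal ℓ := by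
    intro j
    rw [hfdef]
    rw [Real.volume_Icc]
    congr 1
    ring
  set s : ℕ → ℝ := fun j => (volume (E ∩ f j)).toReal with hsdef
  have hfin : ∀ j : ℕ, volume (E ∩ f j) ≠ ⊤ := by
    intro j
    have h1 : volume (E ∩ f j) ≤ ENNReal.ofReal ℓ := by
      rw [← hIvol j]; exact measure_mono inter_subset_right
    exact (lt_of_le_of_lt h1 ENNReal.ofReal_lt_top).ne
  have hs0 : ∀ j : ℕ, 0 ≤ s j := fun j => ENNReal.toReal_nonneg
  have hsl : ∀ j : ℕ, s j ≤ ℓ := by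
    intro j
    have h1 : volume (E ∩ f j) ≤ ENNReal.ofReal ℓ := by
      rw [← hIvol j]; exact measure_mono inter_subset_right
    have := ENNReal.toReal_mono (ENNReal.ofReal_ne_top) h1
    rwa [ENNReal.toReal_ofReal hℓ.le] at this
  -- covering
  have hcover : Set.Icc a b ⊆ ⋃ j ∈ Finset.Icc 1 M, f j := by
    intro x hx
    obtain ⟨hx1, hx2⟩ := hx
    set r : ℝ := (x - a) / ℓ with hr
    have hr0 : 0 ≤ r := div_nonneg (by linarith) hℓ.le
    have hrM : r ≤ M := by
      rw [hr, div_le_iff₀ hℓ]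
      linarith [hMℓ]
    have hxr : x = a + r * ℓ := by
      rw [hr]; field_simp; ring
    by_cases hc : ⌊r⌋₊ + 1 ≤ M
    · refine Set.mem_biUnion (Finset.mem_Icc.mpr ⟨Nat.le_add_left 1 _, hc⟩) ?_
      rw [hfdef]
      have he : ((⌊r⌋₊ + 1 : ℕ) : ℝ) - 1 = (⌊r⌋₊ : ℝ) := by push_cast; ring
      constructor
      · rw [he]
        have h1 : (⌊r⌋₊ : ℝ) ≤ r := Nat.floor_le hr0
        nlinarith
      · have h2 : r < (⌊r⌋₊ : ℝ) + 1 := Nat.lt_floor_add_one r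
        have h3 : ((⌊r⌋₊ + 1 : ℕ) : ℝ) = (⌊r⌋₊ : ℝ) + 1 := by push_cast; ring
        rw [h3]
        nlinarith
    · refine Set.mem_biUnion (Finset.mem_Icc.mpr ⟨by omega, le_refl M⟩) ?_
      rw [hfdef]
      have hMr : (M:ℝ) ≤ r := by
        have : M ≤ ⌊r⌋₊ := by omega
        exact le_trans (by exact_mod_cast this) (Nat.floor_le hr0)
      have hrM' : r = M := le_antisymm hrM hMr
      constructor
      · rw [hxr, hrM']; nlinarith
      · rw [hxr, hrM']
    -- end cover
  have hsum : t * (b - a) ≤ ∑ j ∈ Finset.Icc 1 M, s j := by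
    have hv1 : (volume (Set.Icc a b)).toReal = b - a := by
      rw [Real.volume_Icc, ENNReal.toReal_ofReal (by linarith)]
    have h2 : volume (E ∩ Set.Icc a b) ≤ ∑ j ∈ Finset.Icc 1 M, volume (E ∩ f j) := by
      calc volume (E ∩ Set.Icc a b) ≤ volume (⋃ j ∈ Finset.Icc 1 M, E ∩ f j) := by
            apply measure_mono
            intro x hx
            obtain ⟨hxE, hxI⟩ := hx
            obtain ⟨S, ⟨j, rfl⟩, hS⟩ := hcover hxI
            simp only [Set.mem_iUnion] at hS ⊢
            obtain ⟨hj, hxj⟩ := hS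
            exact ⟨j, hj, hxE, hxj⟩
        _ ≤ ∑ j ∈ Finset.Icc 1 M, volume (E ∩ f j) := measure_biUnion_finset_le _ _
    have h3 : (volume (E ∩ Set.Icc a b)).toReal ≤ ∑ j ∈ Finset.Icc 1 M, s j := by
      rw [hsdef]
      rw [← ENNReal.toReal_sum (fun j _ => hfin j)]
      exact ENNReal.toReal_mono (by simp [hfin]) h2
    calc t * (b - a) = t * (volume (Set.Icc a b)).toReal := by rw [hv1]
      _ ≤ (volume (E ∩ Set.Icc a b)).toReal := hdens
      _ ≤ ∑ j ∈ Finset.Icc 1 M, s j := h3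
  -- negation
  by_contra hcon
  push_neg at hcon
  have hcon' : ∀ j : ℕ, 1 ≤ j → j ≤ M - 2 → (t - ε) * ℓ ≤ s j → s (j + 2) = 0 := by
    intro j h1 h2 h3
    have hdiv : t - ε ≤ (volume (E ∩ Set.Icc (a + ((j:ℝ) - 1) * (b - a) / M) (a + (j:ℝ) * (b - a) / M))).toReal
        / (volume (Set.Icc (a + ((j:ℝ) - 1) * (b - a) / M) (a + (j:ℝ) * (b - a) / M))).toReal := by
      rw [hmd, hmd]
      have hveq : volume (Set.Icc (a + ((j:ℝ) - 1) * ℓ) (a + (j:ℝ) * ℓ)) = ENNReal.ofReal ℓ := hIvol j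
      rw [hveq, ENNReal.toReal_ofReal hℓ.le]
      rw [le_div_iff₀ hℓ]
      exact h3
    have := hcon j h1 h2 hdiv
    have hz : volume (E ∩ Set.Icc (a + ((j:ℝ) + 1) * (b - a) / M) (a + ((j:ℝ) + 2) * (b - a) / M)) = 0 :=
      le_antisymm this (zero_le)
    have heq : f (j + 2) = Set.Icc (a + ((j:ℝ) + 1) * (b - a) / M) (a + ((j:ℝ) + 2) * (b - a) / M) := by
      simp only [hfdef, hmd]
      push_cast
      congr 1 <;> ring
    rw [hsdef]
    simp only [heq, hz, ENNReal.toReal_zero]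
  -- finset counting
  set G : Finset ℕ := (Finset.Icc 1 M).filter (fun j => (t - ε) * ℓ ≤ s j) with hGdef
  set G2 : Finset ℕ := G.filter (fun j => j ≤ M - 2) with hG2def
  set Im : Finset ℕ := G2.image (· + 2) with hImdef
  have hGsub : G ⊆ Finset.Icc 1 M := Finset.filter_subset _ _
  have hG2G : G2 ⊆ G := Finset.filter_subset _ _
  have hImzero : ∀ k ∈ Im, s k = 0 := by
    intro k hk
    rw [hImdef] at hk
    obtain ⟨j, hj, rfl⟩ := Finset.mem_image.mp hk
    have hjG := hG2G hj
    have hjm := Finset.mem_filter.mp hjG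
    have hj2 := (Finset.mem_filter.mp hj).2
    exact hcon' j (Finset.mem_Icc.mp hjm.1).1 hj2 hjm.2
  have hImsub : Im ⊆ Finset.Icc 1 M := by
    intro k hk
    rw [hImdef] at hk
    obtain ⟨j, hj, rfl⟩ := Finset.mem_image.mp hk
    have hj2 := (Finset.mem_filter.mp hj).2
    refine Finset.mem_Icc.mpr ⟨by omega, by omega⟩
  have hdisj : Disjoint G Im := by
    rw [Finset.disjoint_left]
    intro k hkG hkIm
    have h1 := (Finset.mem_filter.mp hkG).2
    have h2 := hImzero k hkIm
    have : (t - ε) * ℓ ≤ 0 := h2 ▸ h1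
    nlinarith
  have hImcard : Im.card = G2.card := Finset.card_image_of_injective _ (fun x y h => by omega)
  have hGcard : G.card ≤ G2.card + 2 := by
    have hsub : G \ G2 ⊆ {M - 1, M} := by
      intro j hj
      obtain ⟨hjG, hjn⟩ := Finset.mem_sdiff.mp hj
      have h2 : ¬ j ≤ M - 2 := by
        intro h
        exact hjn (Finset.mem_filter.mpr ⟨hjG, h⟩)
      have hjM := Finset.mem_Icc.mp (hGsub hjG)
      simp only [Finset.mem_insert, Finset.mem_singleton]
      omega
    have h1 : (G \ G2).card ≤ 2 := le_trans (Finset.card_le_card hsub)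
      (le_trans (Finset.card_insert_le _ _) (by simp))
    have h2 : G.card ≤ G2.card + (G \ G2).card := by
      have := Finset.card_sdiff_add_card_eq_card hG2G
      omega
    omega
  -- sum splitting
  set Rest : Finset ℕ := Finset.Icc 1 M \ (G ∪ Im) with hRdef
  have hunion : Finset.Icc 1 M = (G ∪ Im) ∪ Rest := by
    rw [hRdef, Finset.union_sdiff_of_subset (Finset.union_subset hGsub hImsub)]
  have hdisj2 : Disjoint (G ∪ Im) Rest := Finset.disjoint_sdiff
  have hsplit : ∑ j ∈ Finset.Icc 1 M, s j
      = ∑ j ∈ G, s j + ∑ j ∈ Im, s j + ∑ j ∈ Rest, s j := by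
    rw [hunion, Finset.sum_union hdisj2, Finset.sum_union hdisj]
  have hsumG : ∑ j ∈ G, s j ≤ G.card * ℓ := by
    calc ∑ j ∈ G, s j ≤ ∑ _j ∈ G, ℓ := Finset.sum_le_sum (fun j _ => hsl j)
      _ = G.card * ℓ := by rw [Finset.sum_const, nsmul_eq_mul]
  have hsumIm : ∑ j ∈ Im, s j = 0 := Finset.sum_eq_zero hImzero
  have hsumR : ∑ j ∈ Rest, s j ≤ Rest.card * ((t - ε) * ℓ) := by
    have : ∀ j ∈ Rest, s j ≤ (t - ε) * ℓ := by
      intro j hj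
      obtain ⟨hj1, hj2⟩ := Finset.mem_sdiff.mp hj
      have : j ∉ G := fun h => hj2 (Finset.mem_union_left _ h)
      have hng : ¬ ((t - ε) * ℓ ≤ s j) := by
        intro h
        exact this (Finset.mem_filter.mpr ⟨hj1, h⟩)
      linarith [lt_of_not_ge hng]
    calc ∑ j ∈ Rest, s j ≤ ∑ _j ∈ Rest, (t - ε) * ℓ := Finset.sum_le_sum this
      _ = Rest.card * ((t - ε) * ℓ) := by rw [Finset.sum_const, nsmul_eq_mul]
  have hcards : Rest.card + (G.card + Im.card) = M := by
    have h1 : (G ∪ Im).card = G.card + Im.card := Finset.card_union_of_disjoint hdisj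
    have h2 : Rest.card = (Finset.Icc 1 M).card - (G ∪ Im).card :=
      Finset.card_sdiff_of_subset (Finset.union_subset hGsub hImsub)
    have h3 : (G ∪ Im).card ≤ (Finset.Icc 1 M).card :=
      Finset.card_le_card (Finset.union_subset hGsub hImsub)
    have h4 : (Finset.Icc 1 M).card = M := by
      rw [Nat.card_Icc]; omega
    omega
  -- final contradiction
  have hfinal : t * ((M:ℝ) * ℓ) ≤ G.card * ℓ + Rest.card * ((t - ε) * ℓ) := by
    rw [hMℓ]
    calc t * (b - a) ≤ ∑ j ∈ Finset.Icc 1 M, s j := hsum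
      _ = ∑ j ∈ G, s j + ∑ j ∈ Im, s j + ∑ j ∈ Rest, s j := hsplit
      _ ≤ G.card * ℓ + 0 + Rest.card * ((t - ε) * ℓ) :=
          add_le_add (add_le_add hsumG (le_of_eq hsumIm)) hsumR
      _ = G.card * ℓ + Rest.card * ((t - ε) * ℓ) := by ring
  have hRcard : (Rest.card : ℝ) = (M:ℝ) - G.card - Im.card := by
    have := hcards
    push_cast [← this]
    ring
  have hImR : (Im.card : ℝ) = G2.card := by exact_mod_cast hImcard
  have hGR : (G.card : ℝ) ≤ (G2.card : ℝ) + 2 := by exact_mod_cast hGcard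
  have hG0 : (0:ℝ) ≤ G.card := Nat.cast_nonneg _
  -- derive: t*M ≤ G.card + Rest.card * (t - ε)
  have hkey : t * (M:ℝ) ≤ (G.card : ℝ) + (Rest.card : ℝ) * (t - ε) := by
    have h2 : (t * (M:ℝ)) * ℓ ≤ ((G.card : ℝ) + (Rest.card : ℝ) * (t - ε)) * ℓ := by
      ring_nf
      ring_nf at hfinal
      linarith
    exact le_of_mul_le_mul_right h2 hℓ
  rw [hRcard, hImR] at hkey
  nlinarith [hkey, hεM, hGR, hMpos,
    mul_nonneg (by linarith : (0:ℝ) ≤ (G2.card:ℝ) + 2 - G.card) (by linarith : (0:ℝ) ≤ t - ε),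
    mul_nonneg hG0 (by linarith : (0:ℝ) ≤ 2*(t-ε) - 1)]
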